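/- arXiv:1406.4063 — 2 statements merged into one kernel-verified Lean document; each statement's English description precedes it below -/
import Mathlib

section
/- (Corollary 1: strictly positive lower bound on the filter gain.) Let φ, g_{p,1},...,g_{p,n_{g_p}}, g_1,...,g_{n_g} be C² on an open set containing the compact box I ⊂ ℝ^{n_u}, each with strict univariate Lipschitz constants (κ_{p,ji} for g_{p,j}, κ_{ji} for g_j) and strict second-derivative Lipschitz constants (M_{φ,i₁i₂}, M_{g_{p,j},i₁i₂}, M_{g_j,i₁i₂}), with corresponding worst-case linear growth bounds L̄_{p,j}, L̄_j and worst-case quadratic growth bounds Q̄_φ, Q̄_{p,j}, Q̄_j; let γ_j ∈ [0,1) satisfy |∂g_{p,j}/∂u_i| ≤ γ_j κ_{p,ji} on I, and fix projection parameters ε_{p,j}, ε_j, δ_{g_p,j}, δ_{g,j}, δ_φ > 0. Consider iterates u_{k+1} = u_k + K_k(v_k − u_k) where u_0 ∈ I satisfies g_{p,j}(u_0) < 0 for all j and g_j(u_0) ≤ 0 for all j, where each v_k ∈ I satisfies ∇g_{p,j}(u_k)ᵀ(v_k − u_k) ≤ −δ_{g_p,j} for every j with g_{p,j}(u_k) ≥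 −ε_{p,j}, ∇g_j(u_k)ᵀ(v_k − u_k) ≤ −δ_{g,j} for every j with g_j(u_k) ≥ −ε_j, and ∇φ(u_k)ᵀ(v_k − u_k) ≤ −δ_φ, and where K_k is chosen as the maximal value in [0,1] satisfying, for all j: g_{p,j}(u_k) + K_k Σ_i κ_{p,ji}|v_{k,i} − u_{k,i}| ≤ 0, g_j(u_k + K_k(v_k − u_k)) ≤ 0, and ∇φ(u_k)ᵀ(v_k − u_k) + (K_k/2)Σ_{i₁}Σ_{i₂} M_{φ,i₁i₂}|(v_{k,i₁} − u_{k,i₁})(v_{k,i₂} − u_{k,i₂})| ≤ 0. Then, with K̲ = min[ 2δ_φ/Q̄_φ, min_j min[ε_j/L̄_j, 2δ_{g,j}/Q̄_j], min_j (min[(1 − γ_j)ε_{p,j}, 2(1 − γ_j)δ_{g_p,j}²/Q̄_{p,j}, −g_{p,j}(u_0)] / L̄_{p,j}) ], one has for every k: K_k ≥ min(1, K̲) > 0. -/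
open Set Finset

private lemma clm_eval_sum {n : ℕ} (L : (Fin n → ℝ) →L[ℝ] ℝ) (d : Fin n → ℝ) :
    L d = ∑ i, d i * L (Pi.single i 1) := by
  have hd : d = ∑ i, d i • (Pi.single i 1 : Fin n → ℝ) := by
    rw [show (fun i => d i • (Pi.single i 1 : Fin n → ℝ)) = fun i => Pi.single i (d i) by
      funext i; rw [← Pi.single_smul, smul_eq_mul, mul_one], Finset.univ_sum_single]
  conv_lhs => rw [hd]
  rw [map_sum]
  simp [map_smul, smul_eq_mul]

private lemma core1 {g g' : ℝ → ℝ} {a C : ℝ}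
    (hcont : ContinuousOn g (Set.Icc 0 1))
    (hg : ∀ t ∈ Set.Ioo (0:ℝ) 1, HasDerivAt g (g' t) t)
    (hb : ∀ t ∈ Set.Ioo (0:ℝ) 1, g' t ≤ a + t * C)
    {t : ℝ} (ht : t ∈ Set.Icc (0:ℝ) 1) :
    g t ≤ g 0 + (t * a + t^2 / 2 * C) := by
  set h : ℝ → ℝ := fun s => g s - (s * a + s^2/2 * C) with hh
  have hpoly : ∀ s : ℝ, HasDerivAt (fun s : ℝ => s * a + s^2/2*C) (a + s*C) s := by
    intro s
    have h1 : HasDerivAt (fun s : ℝ => s * a) a s := by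
      simpa using (hasDerivAt_id s).mul_const a
    have h2 : HasDerivAt (fun s : ℝ => s^2/2*C) (s*C) s := by
      have := ((hasDerivAt_pow 2 s).div_const 2).mul_const C
      exact this.congr_deriv (by norm_num)
    exact h1.add h2
  have hanti : AntitoneOn h (Set.Icc 0 1) := by
    apply antitoneOn_of_deriv_nonpos (convex_Icc 0 1)
    · exact hcont.sub (Continuous.continuousOn (by continuity))
    · intro s hs
      rw [interior_Icc] at hs
      exact ((hg s hs).sub (hpoly s)).differentiableAt.differentiableWithinAt
    · intro s hs
      rw [interior_Icc] at hs
      rw [show h = g - (fun s => s * a + s^2/2 * C) from rfl, ((hg s hs).sub (hpoly s)).deriv]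
      linarith [hb s hs]
  have h0 : h t ≤ h 0 := hanti (left_mem_Icc.2 zero_le_one) ht ht.1
  simp only [hh] at h0
  simp at h0
  linarith

section Helpers
variable {n : ℕ} {U : Set (Fin n → ℝ)} {uL uU : Fin n → ℝ}

private lemma taylor1 (hU : IsOpen U) (hIU : Set.Icc uL uU ⊆ U)
    {f : (Fin n → ℝ) → ℝ} (hf : ContDiffOn ℝ 1 f U)
    {b : Fin n → ℝ}
    (hb : ∀ x ∈ Set.Icc uL uU, ∀ i, |fderiv ℝ f x (Pi.single i 1)| ≤ b i)
    {u v : Fin n → ℝ} (hu : u ∈ Set.Icc uL uU) (hv : v ∈ Set.Icc uL uU)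
    {t : ℝ} (ht : t ∈ Set.Icc (0:ℝ) 1) :
    f (u + t • (v - u)) ≤ f u + t * ∑ i, b i * |v i - u i| := by
  set d : Fin n → ℝ := v - u with hd
  set ℓ : ℝ → (Fin n → ℝ) := fun s => u + s • d with hℓ
  have hℓmem : ∀ s ∈ Set.Icc (0:ℝ) 1, ℓ s ∈ Set.Icc uL uU := fun s hs =>
    (convex_Icc uL uU).add_smul_sub_mem hu hv hs
  have hℓcont : Continuous ℓ := by continuity
  have hderiv : ∀ s ∈ Set.Ioo (0:ℝ) 1, HasDerivAt (fun s => f (ℓ s)) (fderiv ℝ f (ℓ s) d) s := by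
    intro s hs
    have hmem : ℓ s ∈ U := hIU (hℓmem s (Set.mem_Icc_of_Ioo hs))
    have hdf : DifferentiableAt ℝ f (ℓ s) :=
      (hf.differentiableOn one_ne_zero).differentiableAt (hU.mem_nhds hmem)
    have hline : HasDerivAt ℓ d s := by
      rw [hℓ]; simpa using ((hasDerivAt_id s).smul_const d).const_add u
    exact (hdf.hasFDerivAt.comp_hasDerivAt s hline)
  have hcont : ContinuousOn (fun s => f (ℓ s)) (Set.Icc 0 1) :=
    hf.continuousOn.comp hℓcont.continuousOn (fun s hs => hIU (hℓmem s hs))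
  have hb' : ∀ s ∈ Set.Ioo (0:ℝ) 1,
      fderiv ℝ f (ℓ s) d ≤ (∑ i, b i * |v i - u i|) + s * 0 := by
    intro s hs
    rw [clm_eval_sum, mul_zero, add_zero]
    apply Finset.sum_le_sum
    intro i _
    calc d i * fderiv ℝ f (ℓ s) (Pi.single i 1)
        ≤ |d i * fderiv ℝ f (ℓ s) (Pi.single i 1)| := le_abs_self _
      _ = |d i| * |fderiv ℝ f (ℓ s) (Pi.single i 1)| := abs_mul _ _
      _ ≤ |d i| * b i := by
          exact mul_le_mul_of_nonneg_left (hb _ (hℓmem s (Set.mem_Icc_of_Ioo hs)) i) (abs_nonneg _)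
      _ = b i * |v i - u i| := by rw [mul_comm]; rfl
  have := core1 hcont hderiv hb' ht
  simp only [hℓ] at this ⊢
  calc f (u + t • d) ≤ f (u + (0:ℝ) • d) + (t * ∑ i, b i * |v i - u i| + t^2/2*0) := this
    _ = f u + t * ∑ i, b i * |v i - u i| := by simp

private lemma taylor2 (hU : IsOpen U) (hIU : Set.Icc uL uU ⊆ U)
    {f : (Fin n → ℝ) → ℝ} (hf : ContDiffOn ℝ 2 f U)
    {M : Fin n → Fin n → ℝ}
    (hM : ∀ x ∈ Set.Icc uL uU, ∀ i₁ i₂,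
      |fderiv ℝ (fun y => fderiv ℝ f y (Pi.single i₁ 1)) x (Pi.single i₂ 1)| ≤ M i₁ i₂)
    {u v : Fin n → ℝ} (hu : u ∈ Set.Icc uL uU) (hv : v ∈ Set.Icc uL uU)
    {t : ℝ} (ht : t ∈ Set.Icc (0:ℝ) 1) :
    f (u + t • (v - u)) ≤ f u + t * fderiv ℝ f u (v - u)
      + t^2/2 * ∑ i₁, ∑ i₂, M i₁ i₂ * |(v i₁ - u i₁) * (v i₂ - u i₂)| := by
  set d : Fin n → ℝ := v - u with hd
  set ℓ : ℝ → (Fin n → ℝ) := fun s => u + s • d with hℓ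
  have hℓmem : ∀ s ∈ Set.Icc (0:ℝ) 1, ℓ s ∈ Set.Icc uL uU := fun s hs =>
    (convex_Icc uL uU).add_smul_sub_mem hu hv hs
  have hℓcont : Continuous ℓ := by continuity
  have hfd1 : ContDiffOn ℝ 1 (fderiv ℝ f) U := hf.fderiv_of_isOpen hU (by norm_num)
  have hp : ∀ i : Fin n, ContDiffOn ℝ 1 (fun x => fderiv ℝ f x (Pi.single i 1)) U :=
    fun i => hfd1.clm_apply contDiffOn_const
  set F : (Fin n → ℝ) → ℝ := fun x => ∑ i, d i * fderiv ℝ f x (Pi.single i 1) with hF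
  have hFeq : ∀ x, F x = fderiv ℝ f x d := fun x => (clm_eval_sum _ _).symm
  have hFc : ContDiffOn ℝ 1 F U := by
    apply ContDiffOn.sum
    intro i _
    exact (hp i).const_smul (d i) |>.congr (fun x _ => by simp [smul_eq_mul])
  have hFb : ∀ x ∈ Set.Icc uL uU, ∀ i₂,
      |fderiv ℝ F x (Pi.single i₂ 1)| ≤ ∑ i₁, |d i₁| * M i₁ i₂ := by
    intro x hx i₂
    have hxU : x ∈ U := hIU hx
    have hdiffi : ∀ i : Fin n, DifferentiableAt ℝ (fun x => fderiv ℝ f x (Pi.single i 1)) x :=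
      fun i => ((hp i).differentiableOn one_ne_zero).differentiableAt (hU.mem_nhds hxU)
    have hFd : fderiv ℝ F x = ∑ i₁, d i₁ • fderiv ℝ (fun y => fderiv ℝ f y (Pi.single i₁ 1)) x := by
      rw [hF, fderiv_fun_sum (fun i _ => ((hdiffi i).const_mul (d i)))]
      congr 1; funext i₁
      rw [fderiv_const_mul (hdiffi i₁)]
    rw [hFd]
    calc |(∑ i₁, d i₁ • fderiv ℝ (fun y => fderiv ℝ f y (Pi.single i₁ 1)) x) (Pi.single i₂ 1)|
        = |∑ i₁, d i₁ * fderiv ℝ (fun y => fderiv ℝ f y (Pi.single i₁ 1)) x (Pi.single i₂ 1)| := by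
          simp [ContinuousLinearMap.sum_apply]
      _ ≤ ∑ i₁, |d i₁ * fderiv ℝ (fun y => fderiv ℝ f y (Pi.single i₁ 1)) x (Pi.single i₂ 1)| :=
          Finset.abs_sum_le_sum_abs _ _
      _ ≤ ∑ i₁, |d i₁| * M i₁ i₂ := by
          apply Finset.sum_le_sum
          intro i₁ _
          rw [abs_mul]
          exact mul_le_mul_of_nonneg_left (hM x hx i₁ i₂) (abs_nonneg _)
  have hderiv : ∀ s ∈ Set.Ioo (0:ℝ) 1, HasDerivAt (fun s => f (ℓ s)) (fderiv ℝ f (ℓ s) d) s := by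
    intro s hs
    have hmem : ℓ s ∈ U := hIU (hℓmem s (Set.mem_Icc_of_Ioo hs))
    have hdf : DifferentiableAt ℝ f (ℓ s) :=
      (hf.differentiableOn (by norm_num)).differentiableAt (hU.mem_nhds hmem)
    have hline : HasDerivAt ℓ d s := by
      rw [hℓ]; simpa using ((hasDerivAt_id s).smul_const d).const_add u
    exact hdf.hasFDerivAt.comp_hasDerivAt s hline
  have hcont : ContinuousOn (fun s => f (ℓ s)) (Set.Icc 0 1) :=
    hf.continuousOn.comp hℓcont.continuousOn (fun s hs => hIU (hℓmem s hs))
  set C : ℝ := ∑ i₁, ∑ i₂, M i₁ i₂ * |(v i₁ - u i₁) * (v i₂ - u i₂)| with hC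
  have hgb : ∀ s ∈ Set.Ioo (0:ℝ) 1, fderiv ℝ f (ℓ s) d ≤ fderiv ℝ f u d + s * C := by
    intro s hs
    have h1 := taylor1 hU hIU hFc (b := fun i₂ => ∑ i₁, |d i₁| * M i₁ i₂) hFb hu hv
      (Set.mem_Icc_of_Ioo hs)
    rw [← hFeq, ← hFeq]
    refine le_trans h1 ?_
    have : ∑ i₂, (∑ i₁, |d i₁| * M i₁ i₂) * |v i₂ - u i₂| = C := by
      rw [hC, Finset.sum_comm]
      congr 1; funext i₂
      rw [Finset.sum_mul]
      congr 1; funext i₁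
      have : |(v i₁ - u i₁) * (v i₂ - u i₂)| = |d i₁| * |v i₂ - u i₂| := by
        rw [abs_mul]; rfl
      rw [this]; ring
    rw [this]
  have := core1 hcont hderiv hgb ht
  simp only [hℓ] at this
  calc f (u + t • d) ≤ f (u + (0:ℝ) • d) + (t * fderiv ℝ f u d + t^2/2 * C) := this
    _ = f u + t * fderiv ℝ f u d + t^2/2 * C := by simp; ring

end Helpers
set_option maxHeartbeats 2000000 in
/-- **Corollary 1.** Strictly positive lower bound on the filter gain:
under the project-and-filter scheme — with cost `φ`, experimental constraints `gp j`,
numerical constraints `gn j`, all C² on an open set containing the box `I = Icc uL uU`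
with strict univariate Lipschitz constants `κp j i`, `κn j i` and strict
second-derivative constants `Mφ`, `Mp j`, `Mn j`, strictness coefficients
`γ j ∈ [0,1)` with `|∂gp_j/∂u_i| ≤ γ j * κp j i` on `I`, projection parameters
`εp, εn, δp, δn, δφ > 0`, projected targets `v k ∈ I` satisfying the projection
constraints, and `K k` chosen maximal in `[0,1]` subject to the three filter
conditions — one has `K k ≥ min 1 K̲ > 0` for every `k`, where `K̲` is as in
equation (5.15) of the paper. -/
theorem filter_gain_lower_bound
    {n mp mg : ℕ} [NeZero mp] [NeZero mg] (uL uU : Fin n → ℝ)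
    (φ : (Fin n → ℝ) → ℝ)
    (gp : Fin mp → (Fin n → ℝ) → ℝ) (gn : Fin mg → (Fin n → ℝ) → ℝ)
    (U : Set (Fin n → ℝ)) (hUopen : IsOpen U) (hIU : Set.Icc uL uU ⊆ U)
    (hφ : ContDiffOn ℝ 2 φ U)
    (hgp : ∀ j, ContDiffOn ℝ 2 (gp j) U)
    (hgn : ∀ j, ContDiffOn ℝ 2 (gn j) U)
    (κp : Fin mp → Fin n → ℝ) (hκppos : ∀ j i, 0 < κp j i)
    (hκp : ∀ j, ∀ u ∈ Set.Icc uL uU, ∀ i,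
      |fderiv ℝ (gp j) u (Pi.single i 1)| < κp j i)
    (κn : Fin mg → Fin n → ℝ) (hκnpos : ∀ j i, 0 < κn j i)
    (hκn : ∀ j, ∀ u ∈ Set.Icc uL uU, ∀ i,
      |fderiv ℝ (gn j) u (Pi.single i 1)| < κn j i)
    (Mφ : Fin n → Fin n → ℝ) (hMφpos : ∀ i₁ i₂, 0 < Mφ i₁ i₂)
    (hMφ : ∀ u ∈ Set.Icc uL uU, ∀ i₁ i₂,
      |fderiv ℝ (fun x => fderiv ℝ φ x (Pi.single i₁ 1)) u (Pi.single i₂ 1)| < Mφ i₁ i₂)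
    (Mp : Fin mp → Fin n → Fin n → ℝ) (hMppos : ∀ j i₁ i₂, 0 < Mp j i₁ i₂)
    (hMp : ∀ j, ∀ u ∈ Set.Icc uL uU, ∀ i₁ i₂,
      |fderiv ℝ (fun x => fderiv ℝ (gp j) x (Pi.single i₁ 1)) u (Pi.single i₂ 1)|
        < Mp j i₁ i₂)
    (Mn : Fin mg → Fin n → Fin n → ℝ) (hMnpos : ∀ j i₁ i₂, 0 < Mn j i₁ i₂)
    (hMn : ∀ j, ∀ u ∈ Set.Icc uL uU, ∀ i₁ i₂,
      |fderiv ℝ (fun x => fderiv ℝ (gn j) x (Pi.single i₁ 1)) u (Pi.single i₂ 1)|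
        < Mn j i₁ i₂)
    (γ : Fin mp → ℝ) (hγ : ∀ j, γ j ∈ Set.Ico (0 : ℝ) 1)
    (hγκ : ∀ j, ∀ u ∈ Set.Icc uL uU, ∀ i,
      |fderiv ℝ (gp j) u (Pi.single i 1)| ≤ γ j * κp j i)
    (εp δp : Fin mp → ℝ) (εn δn : Fin mg → ℝ) (δφ : ℝ)
    (hεp : ∀ j, 0 < εp j) (hδp : ∀ j, 0 < δp j)
    (hεn : ∀ j, 0 < εn j) (hδn : ∀ j, 0 < δn j) (hδφ : 0 < δφ)
    (u v : ℕ → (Fin n → ℝ)) (K : ℕ → ℝ)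
    (hu0I : u 0 ∈ Set.Icc uL uU)
    (hgp0 : ∀ j, gp j (u 0) < 0) (hgn0 : ∀ j, gn j (u 0) ≤ 0)
    (hvI : ∀ k, v k ∈ Set.Icc uL uU)
    (hupd : ∀ k, u (k + 1) = u k + K k • (v k - u k))
    (hprojp : ∀ k j, gp j (u k) ≥ -εp j →
      fderiv ℝ (gp j) (u k) (v k - u k) ≤ -δp j)
    (hprojn : ∀ k j, gn j (u k) ≥ -εn j →
      fderiv ℝ (gn j) (u k) (v k - u k) ≤ -δn j)
    (hprojφ : ∀ k, fderiv ℝ φ (u k) (v k - u k) ≤ -δφ)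
    (hKmax : ∀ k, IsGreatest
      {K' : ℝ | K' ∈ Set.Icc (0 : ℝ) 1 ∧
        (∀ j, gp j (u k) + K' * ∑ i, κp j i * |v k i - u k i| ≤ 0) ∧
        (∀ j, gn j (u k + K' • (v k - u k)) ≤ 0) ∧
        (fderiv ℝ φ (u k) (v k - u k) +
          (K' / 2) * ∑ i₁, ∑ i₂, Mφ i₁ i₂ * |(v k i₁ - u k i₁) * (v k i₂ - u k i₂)|
            ≤ 0)}
      (K k)) :
    0 < min 1
        (min (2 * δφ / ∑ i₁, ∑ i₂, Mφ i₁ i₂ * (uU i₁ - uL i₁) * (uU i₂ - uL i₂))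
          (min
            (⨅ j, min (εn j / ∑ i, κn j i * (uU i - uL i))
              (2 * δn j /
                ∑ i₁, ∑ i₂, Mn j i₁ i₂ * (uU i₁ - uL i₁) * (uU i₂ - uL i₂)))
            (⨅ j,
              min ((1 - γ j) * εp j)
                (min (2 * (1 - γ j) * (δp j) ^ 2 /
                    ∑ i₁, ∑ i₂, Mp j i₁ i₂ * (uU i₁ - uL i₁) * (uU i₂ - uL i₂))
                  (-gp j (u 0)))
              / ∑ i, κp j i * (uU i - uL i)))) ∧
      ∀ k, min 1
        (min (2 * δφ / ∑ i₁, ∑ i₂, Mφ i₁ i₂ * (uU i₁ - uL i₁) * (uU i₂ - uL i₂))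
          (min
            (⨅ j, min (εn j / ∑ i, κn j i * (uU i - uL i))
              (2 * δn j /
                ∑ i₁, ∑ i₂, Mn j i₁ i₂ * (uU i₁ - uL i₁) * (uU i₂ - uL i₂)))
            (⨅ j,
              min ((1 - γ j) * εp j)
                (min (2 * (1 - γ j) * (δp j) ^ 2 /
                    ∑ i₁, ∑ i₂, Mp j i₁ i₂ * (uU i₁ - uL i₁) * (uU i₂ - uL i₂))
                  (-gp j (u 0)))
              / ∑ i, κp j i * (uU i - uL i)))) ≤ K k := by
  classical
  haveI hmpne : Nonempty (Fin mp) := ⟨⟨0, Nat.pos_of_ne_zero (NeZero.ne mp)⟩⟩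
  haveI hmgne : Nonempty (Fin mg) := ⟨⟨0, Nat.pos_of_ne_zero (NeZero.ne mg)⟩⟩
  have huLuU : ∀ i, uL i ≤ uU i := fun i => le_trans (hu0I.1 i) (hu0I.2 i)
  have hne : ∃ i, uL i < uU i := by
    by_contra hcon
    push_neg at hcon
    have hvu : v 0 = u 0 := by
      funext i
      have h1 := (hvI 0).1 i
      have h2 := (hvI 0).2 i
      have h3 := hu0I.1 i
      have h4 := hu0I.2 i
      have h5 := hcon i
      linarith
    have h6 := hprojφ 0
    rw [hvu, sub_self, map_zero] at h6
    linarith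
  obtain ⟨i0, hi0⟩ := hne
  have sum1pos : ∀ (c : Fin n → ℝ), (∀ i, 0 < c i) →
      0 < ∑ i, c i * (uU i - uL i) := by
    intro c hc
    refine Finset.sum_pos' (fun i _ => mul_nonneg (hc i).le (by linarith [huLuU i])) ?_
    exact ⟨i0, Finset.mem_univ _, mul_pos (hc i0) (by linarith)⟩
  have sum2pos : ∀ (M : Fin n → Fin n → ℝ), (∀ i₁ i₂, 0 < M i₁ i₂) →
      0 < ∑ i₁, ∑ i₂, M i₁ i₂ * (uU i₁ - uL i₁) * (uU i₂ - uL i₂) := by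
    intro M hM
    refine Finset.sum_pos' (fun i₁ _ => Finset.sum_nonneg (fun i₂ _ =>
      mul_nonneg (mul_nonneg (hM i₁ i₂).le (by linarith [huLuU i₁])) (by linarith [huLuU i₂]))) ?_
    refine ⟨i0, Finset.mem_univ _, Finset.sum_pos' (fun i₂ _ =>
      mul_nonneg (mul_nonneg (hM i0 i₂).le (by linarith)) (by linarith [huLuU i₂]))
      ⟨i0, Finset.mem_univ _, ?_⟩⟩
    exact mul_pos (mul_pos (hM i0 i0) (by linarith)) (by linarith)
  -- positivity of denominators
  have hQφpos : 0 < ∑ i₁, ∑ i₂, Mφ i₁ i₂ * (uU i₁ - uL i₁) * (uU i₂ - uL i₂) :=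
    sum2pos Mφ hMφpos
  have hLnpos : ∀ j : Fin mg, 0 < ∑ i, κn j i * (uU i - uL i) :=
    fun j => sum1pos _ (hκnpos j)
  have hQnpos : ∀ j : Fin mg,
      0 < ∑ i₁, ∑ i₂, Mn j i₁ i₂ * (uU i₁ - uL i₁) * (uU i₂ - uL i₂) :=
    fun j => sum2pos _ (hMnpos j)
  have hLppos : ∀ j : Fin mp, 0 < ∑ i, κp j i * (uU i - uL i) :=
    fun j => sum1pos _ (hκppos j)
  have hQppos : ∀ j : Fin mp,
      0 < ∑ i₁, ∑ i₂, Mp j i₁ i₂ * (uU i₁ - uL i₁) * (uU i₂ - uL i₂) :=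
    fun j => sum2pos _ (hMppos j)
  have h1γ : ∀ j, 0 < 1 - γ j := fun j => by have := (hγ j).2; linarith
  -- abbreviations
  set A := 2 * δφ / ∑ i₁, ∑ i₂, Mφ i₁ i₂ * (uU i₁ - uL i₁) * (uU i₂ - uL i₂) with hAdef
  set B := ⨅ j, min (εn j / ∑ i, κn j i * (uU i - uL i))
      (2 * δn j / ∑ i₁, ∑ i₂, Mn j i₁ i₂ * (uU i₁ - uL i₁) * (uU i₂ - uL i₂)) with hBdef
  set C := ⨅ j, min ((1 - γ j) * εp j)
        (min (2 * (1 - γ j) * (δp j) ^ 2 /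
            ∑ i₁, ∑ i₂, Mp j i₁ i₂ * (uU i₁ - uL i₁) * (uU i₂ - uL i₂))
          (-gp j (u 0)))
      / ∑ i, κp j i * (uU i - uL i) with hCdef
  set Kst := min 1 (min A (min B C)) with hKstdef
  -- positivity of the three pieces
  have hcgpos : ∀ j : Fin mp, 0 < min ((1 - γ j) * εp j)
      (min (2 * (1 - γ j) * (δp j) ^ 2 /
          ∑ i₁, ∑ i₂, Mp j i₁ i₂ * (uU i₁ - uL i₁) * (uU i₂ - uL i₂))
        (-gp j (u 0))) := by
    intro j
    refine lt_min (mul_pos (h1γ j) (hεp j)) (lt_min ?_ ?_)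
    · exact div_pos (by nlinarith [mul_pos (h1γ j) (pow_pos (hδp j) 2)]) (hQppos j)
    · linarith [hgp0 j]
  have hApos : 0 < A := by
    rw [hAdef]; exact div_pos (by linarith) hQφpos
  have hBpos : 0 < B := by
    rw [hBdef]
    obtain ⟨j, hj⟩ := exists_eq_ciInf_of_finite
      (f := fun j : Fin mg => min (εn j / ∑ i, κn j i * (uU i - uL i))
        (2 * δn j / ∑ i₁, ∑ i₂, Mn j i₁ i₂ * (uU i₁ - uL i₁) * (uU i₂ - uL i₂)))
    exact hj ▸ lt_min (div_pos (hεn j) (hLnpos j)) (div_pos (by linarith [hδn j]) (hQnpos j))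
  have hCpos : 0 < C := by
    rw [hCdef]
    obtain ⟨j, hj⟩ := exists_eq_ciInf_of_finite
      (f := fun j : Fin mp => min ((1 - γ j) * εp j)
        (min (2 * (1 - γ j) * (δp j) ^ 2 /
            ∑ i₁, ∑ i₂, Mp j i₁ i₂ * (uU i₁ - uL i₁) * (uU i₂ - uL i₂))
          (-gp j (u 0)))
      / ∑ i, κp j i * (uU i - uL i))
    exact hj ▸ div_pos (hcgpos j) (hLppos j)
  have hKstpos : 0 < Kst := by
    rw [hKstdef]
    exact lt_min one_pos (lt_min hApos (lt_min hBpos hCpos))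
  have hKst0 : 0 ≤ Kst := hKstpos.le
  have hKst1 : Kst ≤ 1 := by rw [hKstdef]; exact min_le_left _ _
  have hKst01 : Kst ∈ Set.Icc (0:ℝ) 1 := ⟨hKst0, hKst1⟩
  have hKstA : Kst ≤ A := by
    rw [hKstdef]; exact le_trans (min_le_right _ _) (min_le_left _ _)
  have hKstB : ∀ j : Fin mg, Kst ≤ min (εn j / ∑ i, κn j i * (uU i - uL i))
      (2 * δn j / ∑ i₁, ∑ i₂, Mn j i₁ i₂ * (uU i₁ - uL i₁) * (uU i₂ - uL i₂)) := by
    intro j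
    have h1 : Kst ≤ B := by
      rw [hKstdef]
      exact le_trans (min_le_right _ _) (le_trans (min_le_right _ _) (min_le_left _ _))
    refine le_trans h1 ?_
    rw [hBdef]
    exact ciInf_le (Set.finite_range _).bddBelow j
  have hKstC : ∀ j : Fin mp, Kst ≤ min ((1 - γ j) * εp j)
      (min (2 * (1 - γ j) * (δp j) ^ 2 /
          ∑ i₁, ∑ i₂, Mp j i₁ i₂ * (uU i₁ - uL i₁) * (uU i₂ - uL i₂))
        (-gp j (u 0)))
      / ∑ i, κp j i * (uU i - uL i) := by
    intro j
    have h1 : Kst ≤ C := by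
      rw [hKstdef]
      exact le_trans (min_le_right _ _) (le_trans (min_le_right _ _) (min_le_right _ _))
    refine le_trans h1 ?_
    rw [hCdef]
    exact ciInf_le (Set.finite_range _).bddBelow j
  -- iterates stay in the box
  have hKk01 : ∀ k, K k ∈ Set.Icc (0:ℝ) 1 := fun k => ((hKmax k).1).1
  have huI : ∀ k, u k ∈ Set.Icc uL uU := by
    intro k
    induction k with
    | zero => exact hu0I
    | succ k ih =>
      rw [hupd k]
      exact (convex_Icc uL uU).add_smul_sub_mem ih (hvI k) (hKk01 k)
  have hdb : ∀ k i, |v k i - u k i| ≤ uU i - uL i := by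
    intro k i
    have h1 := (hvI k).1 i
    have h2 := (hvI k).2 i
    have h3 := (huI k).1 i
    have h4 := (huI k).2 i
    rw [abs_sub_le_iff]
    constructor <;> linarith
  have hsum1le : ∀ (c : Fin n → ℝ), (∀ i, 0 ≤ c i) → ∀ k,
      ∑ i, c i * |v k i - u k i| ≤ ∑ i, c i * (uU i - uL i) :=
    fun c hc k => Finset.sum_le_sum (fun i _ => mul_le_mul_of_nonneg_left (hdb k i) (hc i))
  have hsum2le : ∀ (M : Fin n → Fin n → ℝ), (∀ i₁ i₂, 0 ≤ M i₁ i₂) → ∀ k,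
      ∑ i₁, ∑ i₂, M i₁ i₂ * |(v k i₁ - u k i₁) * (v k i₂ - u k i₂)|
        ≤ ∑ i₁, ∑ i₂, M i₁ i₂ * (uU i₁ - uL i₁) * (uU i₂ - uL i₂) := by
    intro M hM k
    refine Finset.sum_le_sum (fun i₁ _ => Finset.sum_le_sum (fun i₂ _ => ?_))
    rw [abs_mul]
    calc M i₁ i₂ * (|v k i₁ - u k i₁| * |v k i₂ - u k i₂|)
        ≤ M i₁ i₂ * ((uU i₁ - uL i₁) * (uU i₂ - uL i₂)) :=
          mul_le_mul_of_nonneg_left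
            (mul_le_mul (hdb k i₁) (hdb k i₂) (abs_nonneg _) (by linarith [huLuU i₁]))
            (hM i₁ i₂)
      _ = M i₁ i₂ * (uU i₁ - uL i₁) * (uU i₂ - uL i₂) := (mul_assoc _ _ _).symm
  -- sums of κ·|d| are nonnegative
  have hSnn : ∀ (c : Fin n → ℝ), (∀ i, 0 ≤ c i) → ∀ k,
      0 ≤ ∑ i, c i * |v k i - u k i| :=
    fun c hc k => Finset.sum_nonneg (fun i _ => mul_nonneg (hc i) (abs_nonneg _))
  -- the inductive invariant
  have inv : ∀ k, (∀ j, gn j (u k) ≤ 0) ∧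
      (∀ j, gp j (u k) ≤ -(min ((1 - γ j) * εp j)
        (min (2 * (1 - γ j) * (δp j) ^ 2 /
            ∑ i₁, ∑ i₂, Mp j i₁ i₂ * (uU i₁ - uL i₁) * (uU i₂ - uL i₂))
          (-gp j (u 0))))) := by
    intro k
    induction k with
    | zero =>
      refine ⟨hgn0, fun j => ?_⟩
      have h1 : min ((1 - γ j) * εp j)
          (min (2 * (1 - γ j) * (δp j) ^ 2 /
              ∑ i₁, ∑ i₂, Mp j i₁ i₂ * (uU i₁ - uL i₁) * (uU i₂ - uL i₂))
            (-gp j (u 0))) ≤ -gp j (u 0) :=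
        le_trans (min_le_right _ _) (min_le_right _ _)
      linarith
    | succ k ih =>
      obtain ⟨hK01k, hfp, hfn, hfφ⟩ := (hKmax k).1
      refine ⟨fun j => by rw [hupd k]; exact hfn j, fun j => ?_⟩
      have hK0 : 0 ≤ K k := hK01k.1
      have hγ0 : 0 ≤ γ j := (hγ j).1
      have hγ1 : γ j < 1 := (hγ j).2
      have hSnonneg : 0 ≤ ∑ i, κp j i * |v k i - u k i| :=
        hSnn (κp j) (fun i => (hκppos j i).le) k
      have hfilter : gp j (u k) + K k * ∑ i, κp j i * |v k i - u k i| ≤ 0 := hfp j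
      have hmvt : gp j (u (k+1)) ≤ (1 - γ j) * gp j (u k) := by
        have h1 := taylor1 hUopen hIU ((hgp j).of_le one_le_two)
          (b := fun i => γ j * κp j i) (fun x hx i => hγκ j x hx i) (huI k) (hvI k) hK01k
        have h2 : ∑ i, (γ j * κp j i) * |v k i - u k i|
            = γ j * ∑ i, κp j i * |v k i - u k i| := by
          rw [Finset.mul_sum]
          exact Finset.sum_congr rfl (fun i _ => by ring)
        have h3 : γ j * (K k * ∑ i, κp j i * |v k i - u k i|)
            ≤ γ j * (-gp j (u k)) := mul_le_mul_of_nonneg_left (by linarith) hγ0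
        rw [hupd k]
        calc gp j (u k + K k • (v k - u k))
            ≤ gp j (u k) + K k * ∑ i, (γ j * κp j i) * |v k i - u k i| := h1
          _ = gp j (u k) + γ j * (K k * ∑ i, κp j i * |v k i - u k i|) := by rw [h2]; ring
          _ ≤ gp j (u k) + γ j * (-gp j (u k)) := by linarith
          _ = (1 - γ j) * gp j (u k) := by ring
      have hcg := ih.2 j
      rcases lt_or_ge (gp j (u k)) (-(εp j)) with hcase | hcase
      · -- far from the boundary: contraction suffices
        have hc1 : min ((1 - γ j) * εp j)
            (min (2 * (1 - γ j) * (δp j) ^ 2 /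
                ∑ i₁, ∑ i₂, Mp j i₁ i₂ * (uU i₁ - uL i₁) * (uU i₂ - uL i₂))
              (-gp j (u 0))) ≤ (1 - γ j) * εp j := min_le_left _ _
        have h4 : (1 - γ j) * gp j (u k) ≤ (1 - γ j) * (-(εp j)) :=
          mul_le_mul_of_nonneg_left hcase.le (h1γ j).le
        nlinarith [hmvt, h4, hc1]
      · -- near the boundary: projection is active
        have hproj := hprojp k j hcase
        have habs2 : |fderiv ℝ (gp j) (u k) (v k - u k)|
            ≤ γ j * ∑ i, κp j i * |v k i - u k i| := by
          rw [clm_eval_sum]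
          refine le_trans (Finset.abs_sum_le_sum_abs _ _) ?_
          rw [Finset.mul_sum]
          refine Finset.sum_le_sum (fun i _ => ?_)
          rw [abs_mul]
          calc |v k i - u k i| * |fderiv ℝ (gp j) (u k) (Pi.single i 1)|
              ≤ |v k i - u k i| * (γ j * κp j i) :=
                mul_le_mul_of_nonneg_left (hγκ j _ (huI k) i) (abs_nonneg _)
            _ = γ j * (κp j i * |v k i - u k i|) := by ring
        have hSδ : δp j ≤ ∑ i, κp j i * |v k i - u k i| := by
          have h5 := neg_le_abs (fderiv ℝ (gp j) (u k) (v k - u k))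
          nlinarith [habs2, hproj, hSnonneg, mul_nonneg (sub_nonneg.2 hγ1.le) hSnonneg]
        rcases le_or_gt (K k * ∑ i₁, ∑ i₂, Mp j i₁ i₂ * (uU i₁ - uL i₁) * (uU i₂ - uL i₂))
            (2 * δp j) with hsmall | hbig
        · -- small gain: quadratic penalty does not overcome the descent
          have htay := taylor2 hUopen hIU (hgp j)
            (fun x hx i₁ i₂ => (hMp j x hx i₁ i₂).le) (huI k) (hvI k) hK01k
          have hs2 := hsum2le (Mp j) (fun i₁ i₂ => (hMppos j i₁ i₂).le) k
          have h6 : K k * fderiv ℝ (gp j) (u k) (v k - u k) ≤ K k * (-(δp j)) :=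
            mul_le_mul_of_nonneg_left (by linarith) hK0
          have h7 : (K k)^2/2 * ∑ i₁, ∑ i₂,
                Mp j i₁ i₂ * |(v k i₁ - u k i₁) * (v k i₂ - u k i₂)|
              ≤ (K k)^2/2 * ∑ i₁, ∑ i₂,
                Mp j i₁ i₂ * (uU i₁ - uL i₁) * (uU i₂ - uL i₂) :=
            mul_le_mul_of_nonneg_left hs2 (by positivity)
          have h8 : (K k)^2/2 * (∑ i₁, ∑ i₂,
                Mp j i₁ i₂ * (uU i₁ - uL i₁) * (uU i₂ - uL i₂)) ≤ K k * δp j := by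
            nlinarith [mul_le_mul_of_nonneg_left hsmall hK0]
          rw [hupd k]
          calc gp j (u k + K k • (v k - u k))
              ≤ gp j (u k) + K k * fderiv ℝ (gp j) (u k) (v k - u k)
                + (K k)^2/2 * ∑ i₁, ∑ i₂,
                  Mp j i₁ i₂ * |(v k i₁ - u k i₁) * (v k i₂ - u k i₂)| := htay
            _ ≤ gp j (u k) := by linarith
            _ ≤ _ := hcg
        · -- large gain: the contraction bound gives enough decrease
          have hKbig : 2 * δp j / (∑ i₁, ∑ i₂,
              Mp j i₁ i₂ * (uU i₁ - uL i₁) * (uU i₂ - uL i₂)) < K k :=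
            (div_lt_iff₀ (hQppos j)).2 hbig
          have hcE : min ((1 - γ j) * εp j)
              (min (2 * (1 - γ j) * (δp j) ^ 2 /
                  ∑ i₁, ∑ i₂, Mp j i₁ i₂ * (uU i₁ - uL i₁) * (uU i₂ - uL i₂))
                (-gp j (u 0)))
              ≤ 2 * (1 - γ j) * (δp j) ^ 2 /
                ∑ i₁, ∑ i₂, Mp j i₁ i₂ * (uU i₁ - uL i₁) * (uU i₂ - uL i₂) :=
            le_trans (min_le_right _ _) (min_le_left _ _)
          have e1 : (1 - γ j) * gp j (u k)
              ≤ (1 - γ j) * (-(K k * ∑ i, κp j i * |v k i - u k i|)) :=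
            mul_le_mul_of_nonneg_left (by linarith) (h1γ j).le
          have e2 : K k * δp j ≤ K k * ∑ i, κp j i * |v k i - u k i| :=
            mul_le_mul_of_nonneg_left hSδ hK0
          have e3 : (2 * δp j / (∑ i₁, ∑ i₂,
                Mp j i₁ i₂ * (uU i₁ - uL i₁) * (uU i₂ - uL i₂))) * δp j
              ≤ K k * δp j :=
            mul_le_mul_of_nonneg_right hKbig.le (hδp j).le
          have e4 : (1 - γ j) * ((2 * δp j / (∑ i₁, ∑ i₂,
                Mp j i₁ i₂ * (uU i₁ - uL i₁) * (uU i₂ - uL i₂))) * δp j)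
              ≤ (1 - γ j) * (K k * ∑ i, κp j i * |v k i - u k i|) :=
            mul_le_mul_of_nonneg_left (le_trans e3 e2) (h1γ j).le
          have e5 : (1 - γ j) * ((2 * δp j / (∑ i₁, ∑ i₂,
                Mp j i₁ i₂ * (uU i₁ - uL i₁) * (uU i₂ - uL i₂))) * δp j)
              = 2 * (1 - γ j) * (δp j) ^ 2 /
                ∑ i₁, ∑ i₂, Mp j i₁ i₂ * (uU i₁ - uL i₁) * (uU i₂ - uL i₂) := by
            ring
          linarith [hmvt, e1, e4, hcE, e5]
  -- the candidate gain Kst is always feasible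
  have hmem : ∀ k, Kst ∈ {K' : ℝ | K' ∈ Set.Icc (0 : ℝ) 1 ∧
      (∀ j, gp j (u k) + K' * ∑ i, κp j i * |v k i - u k i| ≤ 0) ∧
      (∀ j, gn j (u k + K' • (v k - u k)) ≤ 0) ∧
      (fderiv ℝ φ (u k) (v k - u k) +
        (K' / 2) * ∑ i₁, ∑ i₂, Mφ i₁ i₂ * |(v k i₁ - u k i₁) * (v k i₂ - u k i₂)|
          ≤ 0)} := by
    intro k
    refine ⟨hKst01, ?_, ?_, ?_⟩
    · -- experimental constraints, univariate-Lipschitz filter condition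
      intro j
      have hSle : ∑ i, κp j i * |v k i - u k i| ≤ ∑ i, κp j i * (uU i - uL i) :=
        hsum1le (κp j) (fun i => (hκppos j i).le) k
      have h1 : Kst * ∑ i, κp j i * |v k i - u k i|
          ≤ Kst * ∑ i, κp j i * (uU i - uL i) :=
        mul_le_mul_of_nonneg_left hSle hKst0
      have h2 : Kst * ∑ i, κp j i * (uU i - uL i) ≤ min ((1 - γ j) * εp j)
          (min (2 * (1 - γ j) * (δp j) ^ 2 /
              ∑ i₁, ∑ i₂, Mp j i₁ i₂ * (uU i₁ - uL i₁) * (uU i₂ - uL i₂))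
            (-gp j (u 0))) := by
        calc Kst * ∑ i, κp j i * (uU i - uL i)
            ≤ (min ((1 - γ j) * εp j)
              (min (2 * (1 - γ j) * (δp j) ^ 2 /
                  ∑ i₁, ∑ i₂, Mp j i₁ i₂ * (uU i₁ - uL i₁) * (uU i₂ - uL i₂))
                (-gp j (u 0)))
              / ∑ i, κp j i * (uU i - uL i)) * ∑ i, κp j i * (uU i - uL i) :=
              mul_le_mul_of_nonneg_right (hKstC j) (hLppos j).le
          _ = _ := div_mul_cancel₀ _ (hLppos j).ne'
      have h3 := (inv k).2 j
      linarith
    · -- numerical constraints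
      intro j
      rcases lt_or_ge (gn j (u k)) (-(εn j)) with hcase | hcase
      · have htay := taylor1 hUopen hIU ((hgn j).of_le one_le_two)
          (fun x hx i => (hκn j x hx i).le) (huI k) (hvI k) hKst01
        have h1 : Kst * ∑ i, κn j i * |v k i - u k i|
            ≤ Kst * ∑ i, κn j i * (uU i - uL i) :=
          mul_le_mul_of_nonneg_left (hsum1le (κn j) (fun i => (hκnpos j i).le) k) hKst0
        have h2 : Kst * ∑ i, κn j i * (uU i - uL i) ≤ εn j := by
          have h3 : Kst ≤ εn j / ∑ i, κn j i * (uU i - uL i) :=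
            le_trans (hKstB j) (min_le_left _ _)
          exact (le_div_iff₀ (hLnpos j)).1 h3
        linarith
      · have hproj := hprojn k j hcase
        have htay := taylor2 hUopen hIU (hgn j)
          (fun x hx i₁ i₂ => (hMn j x hx i₁ i₂).le) (huI k) (hvI k) hKst01
        have hs2 := hsum2le (Mn j) (fun i₁ i₂ => (hMnpos j i₁ i₂).le) k
        have hKQ : Kst * ∑ i₁, ∑ i₂, Mn j i₁ i₂ * (uU i₁ - uL i₁) * (uU i₂ - uL i₂)
            ≤ 2 * δn j :=
          (le_div_iff₀ (hQnpos j)).1 (le_trans (hKstB j) (min_le_right _ _))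
        have hginv : gn j (u k) ≤ 0 := (inv k).1 j
        have h1 : Kst * fderiv ℝ (gn j) (u k) (v k - u k) ≤ Kst * (-(δn j)) :=
          mul_le_mul_of_nonneg_left (by linarith) hKst0
        have h2 : Kst^2/2 * ∑ i₁, ∑ i₂,
              Mn j i₁ i₂ * |(v k i₁ - u k i₁) * (v k i₂ - u k i₂)|
            ≤ Kst^2/2 * ∑ i₁, ∑ i₂,
              Mn j i₁ i₂ * (uU i₁ - uL i₁) * (uU i₂ - uL i₂) :=
          mul_le_mul_of_nonneg_left hs2 (by positivity)
        have h3 : Kst^2/2 * (∑ i₁, ∑ i₂,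
              Mn j i₁ i₂ * (uU i₁ - uL i₁) * (uU i₂ - uL i₂)) ≤ Kst * δn j := by
          nlinarith [mul_le_mul_of_nonneg_left hKQ hKst0]
        calc gn j (u k + Kst • (v k - u k))
            ≤ gn j (u k) + Kst * fderiv ℝ (gn j) (u k) (v k - u k)
              + Kst^2/2 * ∑ i₁, ∑ i₂,
                Mn j i₁ i₂ * |(v k i₁ - u k i₁) * (v k i₂ - u k i₂)| := htay
          _ ≤ 0 := by linarith
    · -- cost filter condition
      have hproj := hprojφ k
      have hs2 := hsum2le Mφ (fun i₁ i₂ => (hMφpos i₁ i₂).le) k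
      have hKQ : Kst * ∑ i₁, ∑ i₂, Mφ i₁ i₂ * (uU i₁ - uL i₁) * (uU i₂ - uL i₂)
          ≤ 2 * δφ := by
        have := hKstA
        rw [hAdef] at this
        exact (le_div_iff₀ hQφpos).1 this
      have h2 : (Kst/2) * ∑ i₁, ∑ i₂,
            Mφ i₁ i₂ * |(v k i₁ - u k i₁) * (v k i₂ - u k i₂)|
          ≤ (Kst/2) * ∑ i₁, ∑ i₂, Mφ i₁ i₂ * (uU i₁ - uL i₁) * (uU i₂ - uL i₂) :=
        mul_le_mul_of_nonneg_left hs2 (by linarith)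
      have h3 : (Kst/2) * (∑ i₁, ∑ i₂, Mφ i₁ i₂ * (uU i₁ - uL i₁) * (uU i₂ - uL i₂))
          = (Kst * ∑ i₁, ∑ i₂, Mφ i₁ i₂ * (uU i₁ - uL i₁) * (uU i₂ - uL i₂)) / 2 := by
        ring
      linarith
  exact ⟨hKstpos, fun k => (hKmax k).2 (hmem k)⟩
end

section
/- (Quantitative static form of Theorem 5: small Fritz John error at a point where the projection is infeasible.) Consider the problem: minimize φ(u) subject to g_{p,j}(u) ≤ 0 (j = 1,...,n_{g_p}), g_j(u) ≤ 0 (j = 1,...,n_g), u^L ⪯ u ⪯ u^U, with all functions C¹ on an open set containing I = {u : u^L ⪯ u ⪯ u^U}. Let u ∈ I be feasible, and let ε_{p,j}, ε_j, δ_{g_p,j}, δ_{g,j}, δ_φ > 0. Suppose there is no d ∈ ℝ^{n_u} satisfying simultaneously: ∇g_{p,j}(u)ᵀ d ≤ −δ_{g_p,j} for every j with g_{p,j}(u) ≥ −ε_{p,j}; ∇g_j(u)ᵀ d ≤ −δ_{g,j} for every j with g_j(u) ≥ −ε_j; ∇φ(u)ᵀ d ≤ −δ_φ; d_i ≥ 0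 for every i with u_i = u^L_i; and d_i ≤ 0 for every i with u_i = u^U_i. Then the Fritz John error (defined with Euclidean normalization of the multipliers) satisfies ℰ(u) ≤ max( max_{j} ε_{p,j}², max_{j} ε_j² ). -/
open Finset Pointwise

lemma clm_eq_sum {n : ℕ} (L : (Fin n → ℝ) →L[ℝ] ℝ) (v : Fin n → ℝ) :
    L v = ∑ i, v i * L (Pi.single i 1) := by
  have hv : v = ∑ i : Fin n, v i • (Pi.single i 1 : Fin n → ℝ) := by
    funext j
    simp [Finset.sum_apply, Pi.single_apply]
  conv_lhs => rw [hv]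
  rw [map_sum]
  simp [smul_eq_mul]

lemma fj_farkas {n mp mg : ℕ}
    (Gφ : Fin n → ℝ) (Gp : Fin mp → Fin n → ℝ) (Gn : Fin mg → Fin n → ℝ)
    (δφ : ℝ) (δp : Fin mp → ℝ) (δn : Fin mg → ℝ)
    (hδφ : 0 < δφ) (hδp : ∀ j, 0 < δp j) (hδn : ∀ j, 0 < δn j)
    (Pp : Fin mp → Prop) [DecidablePred Pp] (Pn : Fin mg → Prop) [DecidablePred Pn]
    (uL uU u : Fin n → ℝ)
    (hinf : ¬ ∃ d : Fin n → ℝ,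
      (∀ j, Pp j → ∑ i, d i * Gp j i ≤ -δp j) ∧
      (∀ j, Pn j → ∑ i, d i * Gn j i ≤ -δn j) ∧
      (∑ i, d i * Gφ i) ≤ -δφ ∧
      (∀ i, u i = uL i → 0 ≤ d i) ∧
      (∀ i, u i = uU i → d i ≤ 0)) :
    ∃ (μφ : ℝ) (μp : Fin mp → ℝ) (μn : Fin mg → ℝ) (ζL ζU : Fin n → ℝ),
      0 ≤ μφ ∧ (∀ j, 0 ≤ μp j) ∧ (∀ j, 0 ≤ μn j) ∧
      (∀ i, 0 ≤ ζL i) ∧ (∀ i, 0 ≤ ζU i) ∧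
      (∀ j, ¬ Pp j → μp j = 0) ∧ (∀ j, ¬ Pn j → μn j = 0) ∧
      (∀ i, u i ≠ uL i → ζL i = 0) ∧ (∀ i, u i ≠ uU i → ζU i = 0) ∧
      0 < μφ + ∑ j, μp j + ∑ j, μn j ∧
      (∀ i, μφ * Gφ i + (∑ j, μp j * Gp j i) + (∑ j, μn j * Gn j i)
        - ζL i + ζU i = 0) := by
  classical
  set Hφ : Fin n → ℝ := δφ⁻¹ • Gφ with hHφ
  set Hp : Fin mp → Fin n → ℝ := fun j => (δp j)⁻¹ • Gp j with hHp
  set Hn : Fin mg → Fin n → ℝ := fun j => (δn j)⁻¹ • Gn j with hHn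
  -- index type
  let ι := Unit ⊕ Fin mp ⊕ Fin mg
  let gen : ι → (Fin n → ℝ) := Sum.elim (fun _ => Hφ)
    (Sum.elim (fun j => if Pp j then Hp j else Hφ) (fun j => if Pn j then Hn j else Hφ))
  let T : (ι → ℝ) →ₗ[ℝ] (Fin n → ℝ) :=
    { toFun := fun l => ∑ k, l k • gen k
      map_add' := by intro x y; simp [add_smul, Finset.sum_add_distrib]
      map_smul' := by intro c x; simp [smul_smul, Finset.smul_sum]  }
  have hTcont : Continuous T := T.continuous_of_finiteDimensional
  let A : Set (Fin n → ℝ) := T '' stdSimplex ℝ ι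
  have hAcomp : IsCompact A := (isCompact_stdSimplex ℝ ι).image hTcont
  have hAconv : Convex ℝ A := (convex_stdSimplex ℝ ι).linear_image T
  let W : Set (Fin n → ℝ) :=
    {w | ∀ i, (u i ≠ uL i → 0 ≤ w i) ∧ (u i ≠ uU i → w i ≤ 0)}
  have hWconv : Convex ℝ W := by
    intro x hx y hy a b ha hb hab
    intro i
    constructor
    · intro h
      have := (hx i).1 h; have := (hy i).1 h
      have : 0 ≤ a * x i + b * y i := by positivity
      simpa using this
    · intro h
      have h1 := (hx i).2 h; have h2 := (hy i).2 h
      have : a * x i + b * y i ≤ 0 := by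
        have := mul_nonpos_of_nonneg_of_nonpos ha h1
        have := mul_nonpos_of_nonneg_of_nonpos hb h2
        linarith
      simpa using this
  have hWclosed : IsClosed W := by
    have : W = ⋂ i, ({w : Fin n → ℝ | u i ≠ uL i → 0 ≤ w i} ∩
        {w : Fin n → ℝ | u i ≠ uU i → w i ≤ 0}) := by
      ext w; simp [W, Set.mem_iInter, forall_and]
    rw [this]
    refine isClosed_iInter fun i => IsClosed.inter ?_ ?_
    · by_cases h : u i = uL i
      · simp [h]
      · have : {w : Fin n → ℝ | u i ≠ uL i → 0 ≤ w i} = {w | 0 ≤ w i} := by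
          ext w; simp [h]
        rw [this]; exact isClosed_le continuous_const (continuous_apply i)
    · by_cases h : u i = uU i
      · simp [h]
      · have : {w : Fin n → ℝ | u i ≠ uU i → w i ≤ 0} = {w | w i ≤ 0} := by
          ext w; simp [h]
        rw [this]; exact isClosed_le (continuous_apply i) continuous_const
  have hW0 : (0 : Fin n → ℝ) ∈ W := by intro i; simp
  have hWsmul : ∀ (t : ℝ), 0 ≤ t → ∀ w ∈ W, t • w ∈ W := by
    intro t ht w hw i
    have he : (t • w) i = t * w i := rfl
    constructor
    · intro h; rw [he]; exact mul_nonneg ht ((hw i).1 h)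
    · intro h; rw [he]; exact mul_nonpos_of_nonneg_of_nonpos ht ((hw i).2 h)
  let S : Set (Fin n → ℝ) := A + W
  have hSconv : Convex ℝ S := hAconv.add hWconv
  have hSclosed : IsClosed S := by
    have := hWclosed.add_left_of_isCompact hAcomp
    exact this
  -- vertices
  have hvert : ∀ k : ι, gen k ∈ A := by
    intro k
    refine ⟨Pi.single k 1, ?_, ?_⟩
    · constructor
      · intro j; by_cases h : j = k <;> simp [Pi.single_apply, h]
      · rw [Finset.sum_pi_single']; simp
    · have hTv : T (Pi.single k 1) = ∑ k', (Pi.single k (1:ℝ) : ι → ℝ) k' • gen k' := rfl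
      rw [hTv, Finset.sum_eq_single k]
      · simp
      · intro b _ hb; simp [Pi.single_apply, hb]
      · simp
  have key : (0 : Fin n → ℝ) ∈ S := by
    by_contra h0
    obtain ⟨f, c, hfc, hc0⟩ := geometric_hahn_banach_closed_point hSconv hSclosed h0
    rw [map_zero] at hc0
    set d0 : Fin n → ℝ := fun i => f (Pi.single i 1) with hd0
    have hf_eq : ∀ v : Fin n → ℝ, f v = ∑ i, v i * d0 i := fun v => clm_eq_sum f v
    have hgenS : ∀ k : ι, f (gen k) < c := by
      intro k
      have : gen k ∈ S := ⟨gen k, hvert k, 0, hW0, by simp⟩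
      exact hfc _ this
    have hfW : ∀ w ∈ W, f w ≤ 0 := by
      intro w hw
      by_contra hfw
      push_neg at hfw
      have hfHφ : f Hφ < c := hgenS (Sum.inl ())
      obtain ⟨t, htpos, hteq⟩ : ∃ t : ℝ, 0 ≤ t ∧ t * f w = (c - f Hφ) + f w := by
        refine ⟨(c - f Hφ) / f w + 1, ?_, ?_⟩
        · have h9 : 0 < (c - f Hφ) / f w := div_pos (by linarith) hfw
          linarith
        · field_simp
      have hmem : Hφ + t • w ∈ S := ⟨Hφ, hvert (Sum.inl ()), t • w,
        hWsmul t htpos w hw, rfl⟩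
      have hlt := hfc _ hmem
      simp only [map_add, map_smul, smul_eq_mul] at hlt
      linarith [hteq]
    -- construct d
    set d : Fin n → ℝ := fun i => (-c)⁻¹ * d0 i with hd
    have hcneg : 0 < -c := by linarith
    apply hinf
    refine ⟨d, ?_, ?_, ?_, ?_, ?_⟩
    · intro j hj
      have hk : f (if Pp j then Hp j else Hφ) < c := hgenS (Sum.inr (Sum.inl j))
      rw [if_pos hj] at hk
      rw [hf_eq] at hk
      have h1 : ∑ i, Hp j i * d0 i = (δp j)⁻¹ * ∑ i, Gp j i * d0 i := by
        rw [Finset.mul_sum]; congr 1; funext i; simp [hHp, Pi.smul_apply]; ring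
      rw [h1] at hk
      have h2 : ∑ i, Gp j i * d0 i < c * δp j := by
        have := (hδp j).le
        calc ∑ i, Gp j i * d0 i = δp j * ((δp j)⁻¹ * ∑ i, Gp j i * d0 i) := by
              rw [← mul_assoc, mul_inv_cancel₀ (ne_of_gt (hδp j)), one_mul]
          _ < δp j * c := by
              exact mul_lt_mul_of_pos_left hk (hδp j)
          _ = c * δp j := by ring
      have h3 : ∑ i, d i * Gp j i = (-c)⁻¹ * ∑ i, Gp j i * d0 i := by
        rw [Finset.mul_sum]; congr 1; funext i; simp [hd]; ring
      rw [h3]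
      calc (-c)⁻¹ * ∑ i, Gp j i * d0 i ≤ (-c)⁻¹ * (c * δp j) := by
            apply mul_le_mul_of_nonneg_left h2.le (by positivity)
        _ = -δp j := by rw [← mul_assoc, inv_neg, neg_mul, inv_mul_cancel₀ hc0.ne, neg_one_mul]
    · intro j hj
      have hk : f (if Pn j then Hn j else Hφ) < c := hgenS (Sum.inr (Sum.inr j))
      rw [if_pos hj] at hk
      rw [hf_eq] at hk
      have h1 : ∑ i, Hn j i * d0 i = (δn j)⁻¹ * ∑ i, Gn j i * d0 i := by
        rw [Finset.mul_sum]; congr 1; funext i; simp [hHn, Pi.smul_apply]; ring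
      rw [h1] at hk
      have h2 : ∑ i, Gn j i * d0 i < c * δn j := by
        calc ∑ i, Gn j i * d0 i = δn j * ((δn j)⁻¹ * ∑ i, Gn j i * d0 i) := by
              rw [← mul_assoc, mul_inv_cancel₀ (ne_of_gt (hδn j)), one_mul]
          _ < δn j * c := mul_lt_mul_of_pos_left hk (hδn j)
          _ = c * δn j := by ring
      have h3 : ∑ i, d i * Gn j i = (-c)⁻¹ * ∑ i, Gn j i * d0 i := by
        rw [Finset.mul_sum]; congr 1; funext i; simp [hd]; ring
      rw [h3]
      calc (-c)⁻¹ * ∑ i, Gn j i * d0 i ≤ (-c)⁻¹ * (c * δn j) := by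
            apply mul_le_mul_of_nonneg_left h2.le (by positivity)
        _ = -δn j := by rw [← mul_assoc, inv_neg, neg_mul, inv_mul_cancel₀ hc0.ne, neg_one_mul]
    · have hk : f Hφ < c := hgenS (Sum.inl ())
      rw [hf_eq] at hk
      have h1 : ∑ i, Hφ i * d0 i = δφ⁻¹ * ∑ i, Gφ i * d0 i := by
        rw [Finset.mul_sum]; congr 1; funext i; simp [hHφ, Pi.smul_apply]; ring
      rw [h1] at hk
      have h2 : ∑ i, Gφ i * d0 i < c * δφ := by
        calc ∑ i, Gφ i * d0 i = δφ * (δφ⁻¹ * ∑ i, Gφ i * d0 i) := by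
              rw [← mul_assoc, mul_inv_cancel₀ (ne_of_gt hδφ), one_mul]
          _ < δφ * c := mul_lt_mul_of_pos_left hk hδφ
          _ = c * δφ := by ring
      have h3 : ∑ i, d i * Gφ i = (-c)⁻¹ * ∑ i, Gφ i * d0 i := by
        rw [Finset.mul_sum]; congr 1; funext i; simp [hd]; ring
      rw [h3]
      calc (-c)⁻¹ * ∑ i, Gφ i * d0 i ≤ (-c)⁻¹ * (c * δφ) := by
            apply mul_le_mul_of_nonneg_left h2.le (by positivity)
        _ = -δφ := by rw [← mul_assoc, inv_neg, neg_mul, inv_mul_cancel₀ hc0.ne, neg_one_mul]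
    · intro i hi
      have hmem : (-(Pi.single i 1) : Fin n → ℝ) ∈ W := by
        intro i'
        constructor
        · intro h
          by_cases h' : i' = i
          · subst h'; exact absurd hi h
          · simp [Pi.single_apply, h']
        · intro h
          by_cases h' : i' = i
          · subst h'; simp
          · simp [Pi.single_apply, h']
      have := hfW _ hmem
      rw [map_neg] at this
      have hd0i : 0 ≤ d0 i := by simpa [hd0] using neg_nonpos.mp this
      have : 0 ≤ (-c)⁻¹ * d0 i := by positivity
      simpa [hd] using this
    · intro i hi
      have hmem : (Pi.single i 1 : Fin n → ℝ) ∈ W := by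
        intro i'
        constructor
        · intro h
          by_cases h' : i' = i
          · subst h'; simp
          · simp [Pi.single_apply, h']
        · intro h
          by_cases h' : i' = i
          · subst h'; exact absurd hi h
          · simp [Pi.single_apply, h']
      have hd0i : d0 i ≤ 0 := by simpa [hd0] using hfW _ hmem
      have : (-c)⁻¹ * d0 i ≤ 0 := mul_nonpos_of_nonneg_of_nonpos (by positivity) hd0i
      simpa [hd] using this
  -- extract multipliers
  obtain ⟨a, ⟨l, hl, hTl⟩, w, hw, hsum⟩ := key
  obtain ⟨hlnn, hlsum⟩ := hl
  set bp : Fin mp → ℝ := fun j => if Pp j then l (Sum.inr (Sum.inl j)) else 0 with hbp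
  set bn : Fin mg → ℝ := fun j => if Pn j then l (Sum.inr (Sum.inr j)) else 0 with hbn
  set aφ : ℝ := l (Sum.inl ()) + (∑ j, if Pp j then 0 else l (Sum.inr (Sum.inl j)))
      + (∑ j, if Pn j then 0 else l (Sum.inr (Sum.inr j))) with haφ
  have hbpnn : ∀ j, 0 ≤ bp j := by
    intro j; rw [hbp]; dsimp only; split
    · exact hlnn _
    · exact le_refl 0
  have hbnnn : ∀ j, 0 ≤ bn j := by
    intro j; rw [hbn]; dsimp only; split
    · exact hlnn _
    · exact le_refl 0
  have haφnn : 0 ≤ aφ := by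
    rw [haφ]
    have h1 : 0 ≤ ∑ j, if Pp j then 0 else l (Sum.inr (Sum.inl j)) :=
      Finset.sum_nonneg fun j _ => by by_cases h : Pp j <;> simp [h] <;> exact hlnn _
    have h2 : 0 ≤ ∑ j, if Pn j then 0 else l (Sum.inr (Sum.inr j)) :=
      Finset.sum_nonneg fun j _ => by by_cases h : Pn j <;> simp [h] <;> exact hlnn _
    have h0 := hlnn (Sum.inl ())
    linarith
  have htotal : aφ + ∑ j, bp j + ∑ j, bn j = 1 := by
    have hsplit : ∑ k, l k = l (Sum.inl ()) + ((∑ j : Fin mp, l (Sum.inr (Sum.inl j)))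
        + (∑ j : Fin mg, l (Sum.inr (Sum.inr j)))) := by
      rw [Fintype.sum_sum_type, Fintype.sum_sum_type, Fintype.sum_unique]
    have hp2 : ∑ j : Fin mp, l (Sum.inr (Sum.inl j))
        = (∑ j, if Pp j then 0 else l (Sum.inr (Sum.inl j))) + ∑ j, bp j := by
      rw [← Finset.sum_add_distrib]
      refine Finset.sum_congr rfl fun j _ => ?_
      simp only [hbp]; split <;> ring
    have hn2 : ∑ j : Fin mg, l (Sum.inr (Sum.inr j))
        = (∑ j, if Pn j then 0 else l (Sum.inr (Sum.inr j))) + ∑ j, bn j := by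
      rw [← Finset.sum_add_distrib]
      refine Finset.sum_congr rfl fun j _ => ?_
      simp only [hbn]; split <;> ring
    rw [haφ]
    linarith [hlsum, hsplit, hp2, hn2]
  have hkey : ∀ i, aφ * (δφ⁻¹ * Gφ i) + (∑ j, bp j * ((δp j)⁻¹ * Gp j i))
      + (∑ j, bn j * ((δn j)⁻¹ * Gn j i)) + w i = 0 := by
    intro i
    have h0 : (T l) i + w i = 0 := by
      have : T l + w = 0 := by rw [hTl]; exact hsum
      have := congrFun this i
      simpa using this
    have hTl_i : (T l) i = ∑ k, l k * gen k i := by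
      show (∑ k, l k • gen k) i = _
      rw [Finset.sum_apply]
      rfl
    rw [hTl_i, Fintype.sum_sum_type, Fintype.sum_sum_type, Fintype.sum_unique] at h0
    have hgφ : gen (Sum.inl ()) i = δφ⁻¹ * Gφ i := rfl
    have hsp : ∀ j : Fin mp, l (Sum.inr (Sum.inl j)) * gen (Sum.inr (Sum.inl j)) i
        = bp j * ((δp j)⁻¹ * Gp j i)
          + (if Pp j then 0 else l (Sum.inr (Sum.inl j))) * (δφ⁻¹ * Gφ i) := by
      intro j
      have : gen (Sum.inr (Sum.inl j)) i = if Pp j then (δp j)⁻¹ * Gp j i else δφ⁻¹ * Gφ i := by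
        show (if Pp j then Hp j else Hφ) i = _
        split <;> rfl
      rw [this, hbp]; dsimp only; split <;> simp
    have hsn : ∀ j : Fin mg, l (Sum.inr (Sum.inr j)) * gen (Sum.inr (Sum.inr j)) i
        = bn j * ((δn j)⁻¹ * Gn j i)
          + (if Pn j then 0 else l (Sum.inr (Sum.inr j))) * (δφ⁻¹ * Gφ i) := by
      intro j
      have : gen (Sum.inr (Sum.inr j)) i = if Pn j then (δn j)⁻¹ * Gn j i else δφ⁻¹ * Gφ i := by
        show (if Pn j then Hn j else Hφ) i = _
        split <;> rfl
      rw [this, hbn]; dsimp only; split <;> simp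
    rw [hgφ, Finset.sum_congr rfl fun j _ => hsp j,
        Finset.sum_congr rfl fun j _ => hsn j,
        Finset.sum_add_distrib, Finset.sum_add_distrib,
        ← Finset.sum_mul, ← Finset.sum_mul] at h0
    rw [haφ]
    ring_nf
    ring_nf at h0
    linarith
  -- final witnesses
  refine ⟨aφ / δφ, fun j => bp j / δp j, fun j => bn j / δn j,
    fun i => max (-(w i)) 0, fun i => max (w i) 0,
    div_nonneg haφnn hδφ.le, fun j => div_nonneg (hbpnn j) (hδp j).le,
    fun j => div_nonneg (hbnnn j) (hδn j).le,
    fun i => le_max_right _ _, fun i => le_max_right _ _, ?_, ?_, ?_, ?_, ?_, ?_⟩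
  · intro j hj
    rw [hbp]; dsimp only; rw [if_neg hj, zero_div]
  · intro j hj
    rw [hbn]; dsimp only; rw [if_neg hj, zero_div]
  · intro i hi
    have h1 := (hw i).1 hi
    have : -(w i) ≤ 0 := by linarith
    exact max_eq_right this
  · intro i hi
    exact max_eq_right ((hw i).2 hi)
  · by_contra hc
    push_neg at hc
    have hs1 : 0 ≤ ∑ j, bp j / δp j :=
      Finset.sum_nonneg fun j _ => div_nonneg (hbpnn j) (hδp j).le
    have hs2 : 0 ≤ ∑ j, bn j / δn j :=
      Finset.sum_nonneg fun j _ => div_nonneg (hbnnn j) (hδn j).le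
    have hμφ0 : aφ / δφ = 0 := le_antisymm (by linarith) (div_nonneg haφnn hδφ.le)
    have haφ0 : aφ = 0 := by
      exact (div_eq_zero_iff.mp hμφ0).resolve_right (ne_of_gt hδφ)
    have hps : ∑ j, bp j / δp j = 0 := le_antisymm (by linarith) hs1
    have hns : ∑ j, bn j / δn j = 0 := le_antisymm (by linarith) hs2
    have hbp0 : ∀ j ∈ Finset.univ, bp j / δp j = 0 :=
      (Finset.sum_eq_zero_iff_of_nonneg
        (fun j _ => div_nonneg (hbpnn j) (hδp j).le)).mp hps
    have hbn0 : ∀ j ∈ Finset.univ, bn j / δn j = 0 :=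
      (Finset.sum_eq_zero_iff_of_nonneg
        (fun j _ => div_nonneg (hbnnn j) (hδn j).le)).mp hns
    have hbp0' : ∀ j, bp j = 0 := by
      intro j
      have := hbp0 j (Finset.mem_univ j)
      exact (div_eq_zero_iff.mp this).resolve_right (ne_of_gt (hδp j))
    have hbn0' : ∀ j, bn j = 0 := by
      intro j
      have := hbn0 j (Finset.mem_univ j)
      exact (div_eq_zero_iff.mp this).resolve_right (ne_of_gt (hδn j))
    rw [haφ0, Finset.sum_congr rfl fun j _ => hbp0' j,
        Finset.sum_congr rfl fun j _ => hbn0' j] at htotal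
    simp at htotal
  · intro i
    have hk := hkey i
    show aφ / δφ * Gφ i + (∑ j, bp j / δp j * Gp j i) + (∑ j, bn j / δn j * Gn j i)
        - max (-(w i)) 0 + max (w i) 0 = 0
    have hwre : -max (-(w i)) 0 + max (w i) 0 = w i := by
      rcases le_total (w i) 0 with h | h
      · rw [max_eq_left (by linarith), max_eq_right h]; ring
      · rw [max_eq_right (by linarith), max_eq_left h]; ring
    have e2 : ∑ j, bp j / δp j * Gp j i = ∑ j, bp j * ((δp j)⁻¹ * Gp j i) :=
      Finset.sum_congr rfl fun j _ => by ring
    have e3 : ∑ j, bn j / δn j * Gn j i = ∑ j, bn j * ((δn j)⁻¹ * Gn j i) :=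
      Finset.sum_congr rfl fun j _ => by ring
    have e1 : aφ / δφ * Gφ i = aφ * (δφ⁻¹ * Gφ i) := by ring
    rw [e1, e2, e3]
    linarith [hwre, hk]

set_option maxHeartbeats 1000000 in
/-- Quantitative static form of Theorem 5: if at a feasible point `u`
the projection system — requiring `∇gp_j(u)ᵀd ≤ -δp j` for the `ε`-active experimental
constraints, `∇gn_j(u)ᵀd ≤ -δn j` for the `ε`-active numerical constraints,
`∇φ(u)ᵀd ≤ -δφ`, `d i ≥ 0` at active lower bounds and `d i ≤ 0` at active upper
bounds — is infeasible, then the Fritz John error (with Euclidean normalization of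
the multipliers) satisfies `ℰ(u) ≤ max (max_j εp j ²) (max_j εn j ²)`. -/
theorem fritz_john_error_small_at_infeasible_projection
    {n mp mg : ℕ} (uL uU : Fin n → ℝ)
    (φ : (Fin n → ℝ) → ℝ)
    (gp : Fin mp → (Fin n → ℝ) → ℝ) (gn : Fin mg → (Fin n → ℝ) → ℝ)
    (U : Set (Fin n → ℝ)) (hUopen : IsOpen U) (hIU : Set.Icc uL uU ⊆ U)
    (hφ : ContDiffOn ℝ 1 φ U)
    (hgp : ∀ j, ContDiffOn ℝ 1 (gp j) U)
    (hgn : ∀ j, ContDiffOn ℝ 1 (gn j) U)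
    (u : Fin n → ℝ) (huI : u ∈ Set.Icc uL uU)
    (hfeasp : ∀ j, gp j u ≤ 0) (hfeasn : ∀ j, gn j u ≤ 0)
    (εp δp : Fin mp → ℝ) (εn δn : Fin mg → ℝ) (δφ : ℝ)
    (hεp : ∀ j, 0 < εp j) (hδp : ∀ j, 0 < δp j)
    (hεn : ∀ j, 0 < εn j) (hδn : ∀ j, 0 < δn j) (hδφ : 0 < δφ)
    (hinfeas : ¬ ∃ d : Fin n → ℝ,
      (∀ j, gp j u ≥ -εp j → fderiv ℝ (gp j) u d ≤ -δp j) ∧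
      (∀ j, gn j u ≥ -εn j → fderiv ℝ (gn j) u d ≤ -δn j) ∧
      fderiv ℝ φ u d ≤ -δφ ∧
      (∀ i, u i = uL i → 0 ≤ d i) ∧
      (∀ i, u i = uU i → d i ≤ 0)) :
    sInf {E : ℝ |
        ∃ (μφ : ℝ) (μp : Fin mp → ℝ) (μn : Fin mg → ℝ) (ζL ζU : Fin n → ℝ),
          0 ≤ μφ ∧ (∀ j, 0 ≤ μp j) ∧ (∀ j, 0 ≤ μn j) ∧
          (∀ i, 0 ≤ ζL i) ∧ (∀ i, 0 ≤ ζU i) ∧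
          μφ ^ 2 + ∑ j, μp j ^ 2 + ∑ j, μn j ^ 2 +
            ∑ i, ζL i ^ 2 + ∑ i, ζU i ^ 2 = 1 ∧
          E = (∑ i, (μφ * fderiv ℝ φ u (Pi.single i 1) +
                (∑ j, μp j * fderiv ℝ (gp j) u (Pi.single i 1)) +
                (∑ j, μn j * fderiv ℝ (gn j) u (Pi.single i 1)) -
                ζL i + ζU i) ^ 2) +
            (∑ j, (μp j * gp j u) ^ 2) + (∑ j, (μn j * gn j u) ^ 2) +
            ∑ i, ((ζL i * (uL i - u i)) ^ 2 + (ζU i * (u i - uU i)) ^ 2)}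
      ≤ max (⨆ j, (εp j) ^ 2) (⨆ j, (εn j) ^ 2) := by
  classical
  set M : ℝ := max (⨆ j, (εp j) ^ 2) (⨆ j, (εn j) ^ 2) with hM
  set Gφ : Fin n → ℝ := fun i => fderiv ℝ φ u (Pi.single i 1) with hGφ
  set Gp' : Fin mp → Fin n → ℝ := fun j i => fderiv ℝ (gp j) u (Pi.single i 1) with hGp'
  set Gn' : Fin mg → Fin n → ℝ := fun j i => fderiv ℝ (gn j) u (Pi.single i 1) with hGn'
  have hinf' : ¬ ∃ d : Fin n → ℝ,
      (∀ j, (gp j u ≥ -εp j) → ∑ i, d i * Gp' j i ≤ -δp j) ∧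
      (∀ j, (gn j u ≥ -εn j) → ∑ i, d i * Gn' j i ≤ -δn j) ∧
      (∑ i, d i * Gφ i) ≤ -δφ ∧
      (∀ i, u i = uL i → 0 ≤ d i) ∧
      (∀ i, u i = uU i → d i ≤ 0) := by
    rintro ⟨d, h1, h2, h3, h4, h5⟩
    refine hinfeas ⟨d, fun j hj => ?_, fun j hj => ?_, ?_, h4, h5⟩
    · rw [clm_eq_sum]; exact h1 j hj
    · rw [clm_eq_sum]; exact h2 j hj
    · rw [clm_eq_sum]; exact h3
  obtain ⟨μφ, μp, μn, ζL, ζU, hμφ, hμp, hμn, hζL, hζU, hsuppp, hsuppn, hsuppL, hsuppU,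
      hpos, hcomb⟩ :=
    fj_farkas Gφ Gp' Gn' δφ δp δn hδφ hδp hδn
      (fun j => gp j u ≥ -εp j) (fun j => gn j u ≥ -εn j) uL uU u hinf'
  set N2 : ℝ := μφ ^ 2 + ∑ j, μp j ^ 2 + ∑ j, μn j ^ 2 + ∑ i, ζL i ^ 2 + ∑ i, ζU i ^ 2
    with hN2
  have hsp : 0 ≤ ∑ j, μp j ^ 2 := Finset.sum_nonneg fun j _ => sq_nonneg _
  have hsn : 0 ≤ ∑ j, μn j ^ 2 := Finset.sum_nonneg fun j _ => sq_nonneg _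
  have hsL : 0 ≤ ∑ i, ζL i ^ 2 := Finset.sum_nonneg fun i _ => sq_nonneg _
  have hsU : 0 ≤ ∑ i, ζU i ^ 2 := Finset.sum_nonneg fun i _ => sq_nonneg _
  have hN2pos : 0 < N2 := by
    by_contra hc
    push_neg at hc
    have hμφ2 : μφ ^ 2 = 0 := by nlinarith [sq_nonneg μφ]
    have hps : ∑ j, μp j ^ 2 = 0 := by nlinarith [sq_nonneg μφ]
    have hns : ∑ j, μn j ^ 2 = 0 := by nlinarith [sq_nonneg μφ]
    have hμφ0 : μφ = 0 := by nlinarith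
    have hμp0 : ∀ j, μp j = 0 := by
      intro j
      have := (Finset.sum_eq_zero_iff_of_nonneg (fun j _ => sq_nonneg (μp j))).mp hps j
        (Finset.mem_univ j)
      exact pow_eq_zero_iff (by norm_num) |>.mp this
    have hμn0 : ∀ j, μn j = 0 := by
      intro j
      have := (Finset.sum_eq_zero_iff_of_nonneg (fun j _ => sq_nonneg (μn j))).mp hns j
        (Finset.mem_univ j)
      exact pow_eq_zero_iff (by norm_num) |>.mp this
    rw [hμφ0, Finset.sum_congr rfl fun j _ => hμp0 j,
        Finset.sum_congr rfl fun j _ => hμn0 j] at hpos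
    simp at hpos
  set N : ℝ := Real.sqrt N2 with hNdef
  have hN : 0 < N := Real.sqrt_pos.mpr hN2pos
  have hNsq : N ^ 2 = N2 := Real.sq_sqrt hN2pos.le
  -- the candidate error value
  set E0 : ℝ := (∑ i, (μφ / N * Gφ i +
        (∑ j, μp j / N * Gp' j i) + (∑ j, μn j / N * Gn' j i) -
        ζL i / N + ζU i / N) ^ 2) +
      (∑ j, (μp j / N * gp j u) ^ 2) + (∑ j, (μn j / N * gn j u) ^ 2) +
      ∑ i, ((ζL i / N * (uL i - u i)) ^ 2 + (ζU i / N * (u i - uU i)) ^ 2) with hE0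
  have hmem : E0 ∈ {E : ℝ |
        ∃ (μφ : ℝ) (μp : Fin mp → ℝ) (μn : Fin mg → ℝ) (ζL ζU : Fin n → ℝ),
          0 ≤ μφ ∧ (∀ j, 0 ≤ μp j) ∧ (∀ j, 0 ≤ μn j) ∧
          (∀ i, 0 ≤ ζL i) ∧ (∀ i, 0 ≤ ζU i) ∧
          μφ ^ 2 + ∑ j, μp j ^ 2 + ∑ j, μn j ^ 2 +
            ∑ i, ζL i ^ 2 + ∑ i, ζU i ^ 2 = 1 ∧
          E = (∑ i, (μφ * fderiv ℝ φ u (Pi.single i 1) +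
                (∑ j, μp j * fderiv ℝ (gp j) u (Pi.single i 1)) +
                (∑ j, μn j * fderiv ℝ (gn j) u (Pi.single i 1)) -
                ζL i + ζU i) ^ 2) +
            (∑ j, (μp j * gp j u) ^ 2) + (∑ j, (μn j * gn j u) ^ 2) +
            ∑ i, ((ζL i * (uL i - u i)) ^ 2 + (ζU i * (u i - uU i)) ^ 2)} := by
    refine ⟨μφ / N, fun j => μp j / N, fun j => μn j / N,
      fun i => ζL i / N, fun i => ζU i / N,
      div_nonneg hμφ hN.le, fun j => div_nonneg (hμp j) hN.le,
      fun j => div_nonneg (hμn j) hN.le,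
      fun i => div_nonneg (hζL i) hN.le, fun i => div_nonneg (hζU i) hN.le, ?_, rfl⟩
    have e1 : ∀ x : ℝ, (x / N) ^ 2 = x ^ 2 / N ^ 2 := fun x => div_pow x N 2
    have e2 : ∑ j, (μp j / N) ^ 2 = (∑ j, μp j ^ 2) / N ^ 2 := by
      rw [Finset.sum_div]; exact Finset.sum_congr rfl fun j _ => e1 _
    have e3 : ∑ j, (μn j / N) ^ 2 = (∑ j, μn j ^ 2) / N ^ 2 := by
      rw [Finset.sum_div]; exact Finset.sum_congr rfl fun j _ => e1 _
    have e4 : ∑ i, (ζL i / N) ^ 2 = (∑ i, ζL i ^ 2) / N ^ 2 := by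
      rw [Finset.sum_div]; exact Finset.sum_congr rfl fun i _ => e1 _
    have e5 : ∑ i, (ζU i / N) ^ 2 = (∑ i, ζU i ^ 2) / N ^ 2 := by
      rw [Finset.sum_div]; exact Finset.sum_congr rfl fun i _ => e1 _
    rw [e1, e2, e3, e4, e5, ← add_div, ← add_div, ← add_div,
      ← add_div, hNsq]
    exact div_self (ne_of_gt hN2pos)
  have hbdd : BddBelow {E : ℝ |
        ∃ (μφ : ℝ) (μp : Fin mp → ℝ) (μn : Fin mg → ℝ) (ζL ζU : Fin n → ℝ),
          0 ≤ μφ ∧ (∀ j, 0 ≤ μp j) ∧ (∀ j, 0 ≤ μn j) ∧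
          (∀ i, 0 ≤ ζL i) ∧ (∀ i, 0 ≤ ζU i) ∧
          μφ ^ 2 + ∑ j, μp j ^ 2 + ∑ j, μn j ^ 2 +
            ∑ i, ζL i ^ 2 + ∑ i, ζU i ^ 2 = 1 ∧
          E = (∑ i, (μφ * fderiv ℝ φ u (Pi.single i 1) +
                (∑ j, μp j * fderiv ℝ (gp j) u (Pi.single i 1)) +
                (∑ j, μn j * fderiv ℝ (gn j) u (Pi.single i 1)) -
                ζL i + ζU i) ^ 2) +
            (∑ j, (μp j * gp j u) ^ 2) + (∑ j, (μn j * gn j u) ^ 2) +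
            ∑ i, ((ζL i * (uL i - u i)) ^ 2 + (ζU i * (u i - uU i)) ^ 2)} := by
    refine ⟨0, fun E hE => ?_⟩
    obtain ⟨a, b, c, dL, dU, -, -, -, -, -, -, rfl⟩ := hE
    positivity
  -- bound E0 ≤ M
  have hM0 : 0 ≤ M := le_max_of_le_left (Real.iSup_nonneg fun j => sq_nonneg _)
  have hMp : ∀ j : Fin mp, εp j ^ 2 ≤ M :=
    fun j => le_trans
      (le_ciSup (f := fun j => εp j ^ 2) (Set.Finite.bddAbove (Set.finite_range _)) j)
      (le_max_left _ _)
  have hMn : ∀ j : Fin mg, εn j ^ 2 ≤ M :=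
    fun j => le_trans
      (le_ciSup (f := fun j => εn j ^ 2) (Set.Finite.bddAbove (Set.finite_range _)) j)
      (le_max_right _ _)
  have hzero : ∀ i, μφ / N * Gφ i + (∑ j, μp j / N * Gp' j i) +
      (∑ j, μn j / N * Gn' j i) - ζL i / N + ζU i / N = 0 := by
    intro i
    have e2 : ∑ j, μp j / N * Gp' j i = (∑ j, μp j * Gp' j i) / N := by
      rw [Finset.sum_div]; exact Finset.sum_congr rfl fun j _ => by ring
    have e3 : ∑ j, μn j / N * Gn' j i = (∑ j, μn j * Gn' j i) / N := by
      rw [Finset.sum_div]; exact Finset.sum_congr rfl fun j _ => by ring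
    rw [e2, e3]
    have e4 : μφ / N * Gφ i + (∑ j, μp j * Gp' j i) / N + (∑ j, μn j * Gn' j i) / N
        - ζL i / N + ζU i / N
        = (μφ * Gφ i + (∑ j, μp j * Gp' j i) + (∑ j, μn j * Gn' j i)
          - ζL i + ζU i) / N := by ring
    rw [e4, hcomb i, zero_div]
  have hfirst : (∑ i, (μφ / N * Gφ i + (∑ j, μp j / N * Gp' j i) +
      (∑ j, μn j / N * Gn' j i) - ζL i / N + ζU i / N) ^ 2) = 0 :=
    Finset.sum_eq_zero fun i _ => by rw [hzero i]; norm_num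
  have hlast : (∑ i, ((ζL i / N * (uL i - u i)) ^ 2 + (ζU i / N * (u i - uU i)) ^ 2)) = 0 := by
    refine Finset.sum_eq_zero fun i _ => ?_
    have h1 : ζL i * (uL i - u i) = 0 := by
      by_cases h : u i = uL i
      · rw [h]; ring
      · rw [hsuppL i h]; ring
    have h2 : ζU i * (u i - uU i) = 0 := by
      by_cases h : u i = uU i
      · rw [h]; ring
      · rw [hsuppU i h]; ring
    have h1' : ζL i / N * (uL i - u i) = 0 := by
      rw [div_mul_eq_mul_div, h1, zero_div]
    have h2' : ζU i / N * (u i - uU i) = 0 := by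
      rw [div_mul_eq_mul_div, h2, zero_div]
    rw [h1', h2']; norm_num
  have hp_bound : (∑ j, (μp j / N * gp j u) ^ 2) ≤ (∑ j, (μp j / N) ^ 2) * M := by
    rw [Finset.sum_mul]
    refine Finset.sum_le_sum fun j _ => ?_
    by_cases h : gp j u ≥ -εp j
    · have hg2 : (gp j u) ^ 2 ≤ εp j ^ 2 := sq_le_sq' h (le_trans (hfeasp j) (hεp j).le)
      calc (μp j / N * gp j u) ^ 2 = (μp j / N) ^ 2 * (gp j u) ^ 2 := by ring
        _ ≤ (μp j / N) ^ 2 * M := by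
            exact mul_le_mul_of_nonneg_left (le_trans hg2 (hMp j)) (sq_nonneg _)
    · rw [hsuppp j h]
      have : (0:ℝ) / N = 0 := zero_div N
      rw [this]
      norm_num
  have hn_bound : (∑ j, (μn j / N * gn j u) ^ 2) ≤ (∑ j, (μn j / N) ^ 2) * M := by
    rw [Finset.sum_mul]
    refine Finset.sum_le_sum fun j _ => ?_
    by_cases h : gn j u ≥ -εn j
    · have hg2 : (gn j u) ^ 2 ≤ εn j ^ 2 := sq_le_sq' h (le_trans (hfeasn j) (hεn j).le)
      calc (μn j / N * gn j u) ^ 2 = (μn j / N) ^ 2 * (gn j u) ^ 2 := by ring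
        _ ≤ (μn j / N) ^ 2 * M := by
            exact mul_le_mul_of_nonneg_left (le_trans hg2 (hMn j)) (sq_nonneg _)
    · rw [hsuppn j h]
      have : (0:ℝ) / N = 0 := zero_div N
      rw [this]
      norm_num
  have hsum_le_one : (∑ j, (μp j / N) ^ 2) + (∑ j, (μn j / N) ^ 2) ≤ 1 := by
    have e2 : ∑ j, (μp j / N) ^ 2 = (∑ j, μp j ^ 2) / N ^ 2 := by
      rw [Finset.sum_div]; exact Finset.sum_congr rfl fun j _ => div_pow _ _ _
    have e3 : ∑ j, (μn j / N) ^ 2 = (∑ j, μn j ^ 2) / N ^ 2 := by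
      rw [Finset.sum_div]; exact Finset.sum_congr rfl fun j _ => div_pow _ _ _
    rw [e2, e3, ← add_div, hNsq]
    rw [div_le_one hN2pos]
    nlinarith [sq_nonneg μφ]
  have hE0le : E0 ≤ M := by
    rw [hE0, hfirst, hlast]
    have := add_le_add hp_bound hn_bound
    calc 0 + (∑ j, (μp j / N * gp j u) ^ 2) + (∑ j, (μn j / N * gn j u) ^ 2) + 0
        = (∑ j, (μp j / N * gp j u) ^ 2) + (∑ j, (μn j / N * gn j u) ^ 2) := by ring
      _ ≤ (∑ j, (μp j / N) ^ 2) * M + (∑ j, (μn j / N) ^ 2) * M := this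
      _ = ((∑ j, (μp j / N) ^ 2) + (∑ j, (μn j / N) ^ 2)) * M := by ring
      _ ≤ 1 * M := mul_le_mul_of_nonneg_right hsum_le_one hM0
      _ = M := one_mul M
  exact csInf_le_of_le hbdd hmem hE0le
end
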